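/- Let f : ℝ^n → ℝ be continuously differentiable, let η > 0, and let {x_k} be a sequence contained in a compact set, satisfying for each k the sufficient decrease f(x_{k+1}) ≤ f(x_k) − η α_k ‖∇f(x_k)‖² and the step-length identity ‖x_{k+1} − x_k‖ = 2 α_k ‖∇f(x_k)‖ / √(1 + α_k² ‖∇f(x_k)‖²) with α_k ≥ α_min > 0. Suppose x_* is an accumulation point of {x_k} (hence a critical point with f(x_k) ↓ f(x_*)) and f satisfies the Kurdyka–Łojasiewicz inequality at x_*: there are a neighborhood U of x_*, θ ∈ (0,1), and C₁ > 0 with |f(x) − f(x_*)|^θ ≤ C₁ ‖∇f(x)‖ for all x ∈ U. Then the whole sequence has finite length, Σ_{k=1}^∞ ‖x_{k+1} − x_k‖ < ∞, and {x_k} converges to the unique critical point x_*. -/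

import Mathlib

open Filter

lemma rpow_tangent_aux {a b p : ℝ} (hb : 0 ≤ b) (hba : b ≤ a)
    (hp0 : 0 < p) (hp1 : p < 1) :
    p * a ^ (p - 1) * (a - b) ≤ a ^ p - b ^ p := by
  rcases eq_or_lt_of_le hba with h | h
  · simp [h]
  · obtain ⟨c, hc, hc'⟩ := exists_hasDerivAt_eq_slope (fun t => t ^ p)
      (fun t => p * t ^ (p - 1)) h
      (fun t _ => (Real.continuousAt_rpow_const t p (Or.inr hp0.le)).continuousWithinAt)
      (fun t ht => Real.hasDerivAt_rpow_const (Or.inl (ne_of_gt (lt_of_le_of_lt hb ht.1))))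
    have hcpos : 0 < c := lt_of_le_of_lt hb hc.1
    have h1 : a ^ (p - 1) ≤ c ^ (p - 1) :=
      Real.rpow_le_rpow_of_nonpos hcpos hc.2.le (by linarith)
    have h2 : a ^ p - b ^ p = p * c ^ (p - 1) * (a - b) := by
      rw [hc', div_mul_cancel₀]
      exact sub_ne_zero.mpr h.ne'
    rw [h2]
    exact mul_le_mul_of_nonneg_right (mul_le_mul_of_nonneg_left h1 hp0.le) (by linarith)

theorem kl_global_convergence
    {n : ℕ} (f : EuclideanSpace ℝ (Fin n) → ℝ)
    (hf : ContDiff ℝ 1 f)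
    (η αmin : ℝ) (hη : 0 < η) (hαmin : 0 < αmin)
    (x : ℕ → EuclideanSpace ℝ (Fin n)) (α : ℕ → ℝ)
    (K : Set (EuclideanSpace ℝ (Fin n))) (hK : IsCompact K) (hxK : ∀ k, x k ∈ K)
    (hα : ∀ k, αmin ≤ α k)
    (hdec : ∀ k, f (x (k + 1)) ≤ f (x k) - η * α k * ‖gradient f (x k)‖ ^ 2)
    (hstep : ∀ k, ‖x (k + 1) - x k‖
      = 2 * α k * ‖gradient f (x k)‖
          / Real.sqrt (1 + (α k) ^ 2 * ‖gradient f (x k)‖ ^ 2))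
    (xstar : EuclideanSpace ℝ (Fin n))
    (haccum : ∃ φ : ℕ → ℕ, StrictMono φ ∧ Tendsto (x ∘ φ) atTop (nhds xstar))
    (U : Set (EuclideanSpace ℝ (Fin n))) (hU : U ∈ nhds xstar)
    (θ C₁ : ℝ) (hθ : θ ∈ Set.Ioo (0 : ℝ) 1) (hC₁ : 0 < C₁)
    (hKL : ∀ y ∈ U, |f y - f xstar| ^ θ ≤ C₁ * ‖gradient f y‖) :
    Summable (fun k => ‖x (k + 1) - x k‖) ∧
    Tendsto x atTop (nhds xstar) := by
  obtain ⟨φ, hφ, hxφ⟩ := haccum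
  obtain ⟨hθ0, hθ1⟩ := hθ
  set p : ℝ := 1 - θ with hpdef
  have hp0 : 0 < p := by simp only [hpdef]; linarith
  have hp1 : p < 1 := by simp only [hpdef]; linarith
  have hcont : Continuous f := hf.continuous
  set g : ℕ → ℝ := fun k => ‖gradient f (x k)‖ with hgdef
  set s : ℕ → ℝ := fun k => ‖x (k + 1) - x k‖ with hsdef
  have hα' : ∀ k, 0 < α k := fun k => lt_of_lt_of_le hαmin (hα k)
  have hgnn : ∀ k, 0 ≤ g k := fun k => norm_nonneg _
  have hsnn : ∀ k, 0 ≤ s k := fun k => norm_nonneg _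
  -- f along the sequence is antitone
  have hηα : ∀ k, 0 ≤ η * α k * g k ^ 2 :=
    fun k => mul_nonneg (mul_nonneg hη.le (hα' k).le) (sq_nonneg _)
  have hmono : Antitone fun k => f (x k) := antitone_nat_of_succ_le fun k => by
    have h1 := hdec k
    have h2 := hηα k
    show f (x (k + 1)) ≤ f (x k)
    nlinarith
  -- bounded below
  obtain ⟨z, hz, hzmin⟩ := hK.exists_isMinOn ⟨x 0, hxK 0⟩ hcont.continuousOn
  have hbdd : BddBelow (Set.range fun k => f (x k)) := by
    refine ⟨f z, ?_⟩
    rintro y ⟨k, rfl⟩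
    exact hzmin (hxK k)
  -- limit of f (x k) is f xstar
  have hinf := tendsto_atTop_ciInf hmono hbdd
  have hsub1 : Tendsto (fun j => f (x (φ j))) atTop (nhds (⨅ k, f (x k))) :=
    hinf.comp hφ.tendsto_atTop
  have hsub2 : Tendsto (fun j => f (x (φ j))) atTop (nhds (f xstar)) :=
    (hcont.tendsto xstar).comp hxφ
  have hinfeq : (⨅ k, f (x k)) = f xstar := tendsto_nhds_unique hsub1 hsub2
  have hlim : Tendsto (fun k => f (x k)) atTop (nhds (f xstar)) := hinfeq ▸ hinf
  have hge : ∀ k, f xstar ≤ f (x k) := fun k => hinfeq ▸ ciInf_le hbdd k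
  set r : ℕ → ℝ := fun k => f (x k) - f xstar with hrdef
  have hrnn : ∀ k, 0 ≤ r k := fun k => sub_nonneg.mpr (hge k)
  have hrdec : ∀ k, η * α k * g k ^ 2 ≤ r k - r (k + 1) := fun k => by
    have := hdec k
    simp only [hrdef]
    linarith
  have hrlim : Tendsto r atTop (nhds 0) := by
    have := hlim.sub_const (f xstar)
    simpa using this
  set M : ℝ := 2 * C₁ / (η * p) with hMdef
  have hM : 0 < M := by positivity
  -- key per-step inequality
  have key : ∀ k, x k ∈ U → s k ≤ M * (r k ^ p - r (k + 1) ^ p) := by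
    intro k hkU
    rcases eq_or_lt_of_le (hrnn k) with hr0 | hrpos
    · -- r k = 0 : gradient vanishes, step is zero
      have hg0 : g k = 0 := by
        have h3 : η * α k * g k ^ 2 ≤ η * α k * 0 := by
          rw [mul_zero]; linarith [hrdec k, hrnn (k + 1)]
        have h4 : g k ^ 2 ≤ 0 := le_of_mul_le_mul_left h3 (mul_pos hη (hα' k))
        exact sq_eq_zero_iff.mp (le_antisymm h4 (sq_nonneg _))
      have hs0 : s k = 0 := by
        rw [hsdef]; simp only []
        rw [hstep k]
        rw [show ‖gradient f (x k)‖ = g k from rfl, hg0]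
        simp
      have hr1 : r (k + 1) = 0 := by
        have h5 := hrdec k
        rw [hg0] at h5
        simp at h5
        exact le_antisymm (by linarith) (hrnn (k + 1))
      rw [hs0, ← hr0, hr1]
      simp
    · -- r k > 0 : use KL
      have hkl : r k ^ θ ≤ C₁ * g k := by
        have := hKL (x k) hkU
        rwa [abs_of_nonneg (hrnn k)] at this
      have hgpos : 0 < g k := by
        by_contra hcon
        push_neg at hcon
        have hT : 0 < r k ^ θ := Real.rpow_pos_of_pos hrpos θ
        nlinarith
      -- step bound : s k ≤ 2 α g
      have hstep' : s k ≤ 2 * α k * g k := by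
        rw [hsdef]; simp only []
        rw [hstep k]
        have hsq : (1:ℝ) ≤ Real.sqrt (1 + (α k) ^ 2 * ‖gradient f (x k)‖ ^ 2) := by
          rw [Real.one_le_sqrt]
          nlinarith [sq_nonneg (α k * g k)]
        exact div_le_self
          (mul_nonneg (mul_nonneg (by norm_num) (hα' k).le) (norm_nonneg _)) hsq
      -- fact B
      have hB : η * α k * g k * r k ^ θ ≤ C₁ * (r k - r (k + 1)) := by
        have e1 : η * α k * g k * r k ^ θ ≤ η * α k * g k * (C₁ * g k) :=
          mul_le_mul_of_nonneg_left hkl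
            (mul_nonneg (mul_nonneg hη.le (hα' k).le) (hgnn k))
        have e3 : C₁ * (η * α k * g k ^ 2) ≤ C₁ * (r k - r (k + 1)) :=
          mul_le_mul_of_nonneg_left (hrdec k) hC₁.le
        nlinarith [e1, e3]
      -- concavity
      have hr1le : r (k + 1) ≤ r k := by linarith [hrdec k, hηα k]
      have hC : p * r k ^ (p - 1) * (r k - r (k + 1)) ≤ r k ^ p - r (k + 1) ^ p :=
        rpow_tangent_aux (hrnn (k + 1)) hr1le hp0 hp1
      have hT : 0 < r k ^ θ := Real.rpow_pos_of_pos hrpos θ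
      have hrw : r k ^ (p - 1) = (r k ^ θ)⁻¹ := by
        rw [show p - 1 = -θ by simp [hpdef], Real.rpow_neg (hrnn k)]
      -- combine
      have hstep2 : 2 * α k * g k ≤ M * (p * r k ^ (p - 1) * (r k - r (k + 1))) := by
        rw [hrw]
        rw [show M * (p * (r k ^ θ)⁻¹ * (r k - r (k + 1)))
            = (2 * C₁ * (r k - r (k + 1))) / (η * r k ^ θ) by
          rw [hMdef]; field_simp]
        rw [le_div_iff₀ (by positivity)]
        nlinarith [hB]
      calc s k ≤ 2 * α k * g k := hstep'
        _ ≤ M * (p * r k ^ (p - 1) * (r k - r (k + 1))) := hstep2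
        _ ≤ M * (r k ^ p - r (k + 1) ^ p) := mul_le_mul_of_nonneg_left hC hM.le
  -- choose ε and N
  obtain ⟨ε, hε, hεU⟩ := Metric.mem_nhds_iff.mp hU
  have hrp_lim : Tendsto (fun k => M * r k ^ p) atTop (nhds 0) := by
    have h1 : Tendsto (fun k => r k ^ p) atTop (nhds 0) := by
      have := (Real.continuousAt_rpow_const 0 p (Or.inr hp0.le)).tendsto.comp hrlim
      simpa [Real.zero_rpow hp0.ne', Function.comp_def] using this
    simpa using h1.const_mul M
  have ev1 : ∀ᶠ j in atTop, dist (x (φ j)) xstar < ε / 2 :=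
    (Metric.tendsto_nhds.mp hxφ) (ε / 2) (by positivity)
  have ev2 : ∀ᶠ j in atTop, M * r (φ j) ^ p < ε / 2 := by
    have h := (hrp_lim.comp hφ.tendsto_atTop).eventually (eventually_lt_nhds (show (0:ℝ) < ε/2 by positivity))
    simpa using h
  obtain ⟨j, hj1, hj2⟩ := (ev1.and ev2).exists
  set N := φ j with hNdef
  have hrmono : Antitone r := fun a b hab => by
    simp only [hrdef]
    have := hmono hab
    linarith
  -- main induction
  have main : ∀ m, dist (x (N + m)) xstar < ε ∧
      (∑ i ∈ Finset.range m, s (N + i)) ≤ M * (r N ^ p - r (N + m) ^ p) := by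
    intro m
    induction m with
    | zero => exact ⟨by simpa using lt_trans hj1 (by linarith), by simp⟩
    | succ m ih =>
      have hUm : x (N + m) ∈ U := hεU (Metric.mem_ball.mpr ih.1)
      have hk := key (N + m) hUm
      have hsum : (∑ i ∈ Finset.range (m + 1), s (N + i))
          ≤ M * (r N ^ p - r (N + m + 1) ^ p) := by
        rw [Finset.sum_range_succ]
        have := ih.2
        linarith
      constructor
      · have htri : dist (x (N + (m + 1))) xstar
            ≤ dist (x N) (x (N + (m + 1))) + dist (x N) xstar := by
          rw [dist_comm (x N) (x (N + (m + 1)))]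
          exact dist_triangle _ _ _
        have hlen : dist (x N) (x (N + (m + 1)))
            ≤ ∑ i ∈ Finset.range (m + 1), s (N + i) := by
          have h := dist_le_range_sum_dist (fun i => x (N + i)) (m + 1)
          simp only [Nat.add_zero] at h
          refine h.trans (le_of_eq (Finset.sum_congr rfl fun i _ => ?_))
          rw [dist_eq_norm']
          rfl
        have hbound : (∑ i ∈ Finset.range (m + 1), s (N + i)) < ε / 2 := by
          have hnonneg : 0 ≤ r (N + m + 1) ^ p := Real.rpow_nonneg (hrnn _) p
          have : M * (r N ^ p - r (N + m + 1) ^ p) ≤ M * r N ^ p := by nlinarith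
          linarith
        calc dist (x (N + (m + 1))) xstar
            ≤ dist (x N) (x (N + (m + 1))) + dist (x N) xstar := htri
          _ < ε / 2 + ε / 2 := by
              have := hlen.trans_lt hbound
              exact add_lt_add this hj1
          _ = ε := by ring
      · exact hsum
  -- summability
  have hsum_shift : Summable fun i => s (N + i) := by
    refine summable_of_sum_range_le (c := M * r N ^ p) (fun i => hsnn _) (fun m => ?_)
    have h := (main m).2
    have hnonneg : 0 ≤ r (N + m) ^ p := Real.rpow_nonneg (hrnn _) p
    nlinarith
  have hsumS : Summable s := by
    rw [← summable_nat_add_iff N]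
    simpa [add_comm] using hsum_shift
  -- convergence
  have hcauchy : CauchySeq x := by
    refine cauchySeq_of_dist_le_of_summable s (fun k => ?_) hsumS
    rw [dist_eq_norm, norm_sub_rev]
  obtain ⟨L, hL⟩ := cauchySeq_tendsto_of_complete hcauchy
  have hLx : L = xstar := tendsto_nhds_unique (hL.comp hφ.tendsto_atTop) hxφ
  exact ⟨hsumS, hLx ▸ hL⟩
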